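/- arXiv:1506.02738 — 4 statements merged into one kernel-verified Lean document; each statement's English description precedes it below -/
import Mathlib

section
/- Let k > 0, d > 0, M ∈ [0,1), K₀ = kd/(π√(1−M²)), and let n ∈ ℕ with n < K₀, so that β±_n = (−kM ± √(k² − n²π²(1−M²)/d²))/(1−M²) are real. Let L > 0, S > 0, set I = L + iS, and define A±_n = ∓ e^{iβ∓_n I}/(e^{iβ⁺_n I} − e^{iβ⁻_n I}) (the denominator being nonzero). Then |A⁻_n/A⁺_n| = e^{−(2k/(1−M²))√(1 − n²/K₀²)·S}. -/
/-- Reflection coefficient amplitude for propagating modes (`n < K₀`):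
with `I = L + iS` and `A±ₙ = ∓ e^{iβ∓ₙI}/(e^{iβ⁺ₙI} - e^{iβ⁻ₙI})`, one has
`|A⁻ₙ/A⁺ₙ| = e^{-(2k/(1-M²))√(1-n²/K₀²)·S}`. -/
theorem stmt_10 (k d M : ℝ) (hk : 0 < k) (hd : 0 < d) (hM0 : 0 ≤ M) (hM1 : M < 1)
    (K₀ : ℝ) (hK₀ : K₀ = k * d / (Real.pi * Real.sqrt (1 - M ^ 2)))
    (n : ℕ) (hn : (n : ℝ) < K₀)
    (βp βm : ℝ)
    (hβp : βp = (-(k * M) + Real.sqrt (k ^ 2 - (n : ℝ) ^ 2 * Real.pi ^ 2 * (1 - M ^ 2) / d ^ 2))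
      / (1 - M ^ 2))
    (hβm : βm = (-(k * M) - Real.sqrt (k ^ 2 - (n : ℝ) ^ 2 * Real.pi ^ 2 * (1 - M ^ 2) / d ^ 2))
      / (1 - M ^ 2))
    (L S : ℝ) (hL : 0 < L) (hS : 0 < S)
    (Iv : ℂ) (hIv : Iv = (L : ℂ) + Complex.I * (S : ℂ))
    (Ap Am : ℂ)
    (hAp : Ap = -Complex.exp (Complex.I * (βm : ℂ) * Iv)
      / (Complex.exp (Complex.I * (βp : ℂ) * Iv) - Complex.exp (Complex.I * (βm : ℂ) * Iv)))
    (hAm : Am = Complex.exp (Complex.I * (βp : ℂ) * Iv)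
      / (Complex.exp (Complex.I * (βp : ℂ) * Iv) - Complex.exp (Complex.I * (βm : ℂ) * Iv))) :
    ‖Am / Ap‖
      = Real.exp (-(2 * k / (1 - M ^ 2)) * Real.sqrt (1 - (n : ℝ) ^ 2 / K₀ ^ 2) * S) := by
  have hM2 : (0:ℝ) < 1 - M ^ 2 := by nlinarith
  have hπ : (0:ℝ) < Real.pi := Real.pi_pos
  have hsqM : Real.sqrt (1 - M ^ 2) ^ 2 = 1 - M ^ 2 := Real.sq_sqrt hM2.le
  have hsqMpos : 0 < Real.sqrt (1 - M ^ 2) := Real.sqrt_pos.mpr hM2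
  have hK₀pos : 0 < K₀ := lt_of_le_of_lt (Nat.cast_nonneg n) hn
  have hfrac : 0 < 1 - (n : ℝ) ^ 2 / K₀ ^ 2 := by
    have h1 : (n : ℝ) ^ 2 < K₀ ^ 2 := by nlinarith [Nat.cast_nonneg (α := ℝ) n]
    have : (n : ℝ) ^ 2 / K₀ ^ 2 < 1 := (div_lt_one (by positivity)).mpr h1
    linarith
  have hkey : k ^ 2 - (n : ℝ) ^ 2 * Real.pi ^ 2 * (1 - M ^ 2) / d ^ 2
      = k ^ 2 * (1 - (n : ℝ) ^ 2 / K₀ ^ 2) := by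
    have hK2 : K₀ ^ 2 = k ^ 2 * d ^ 2 / (Real.pi ^ 2 * (1 - M ^ 2)) := by
      rw [hK₀, div_pow, mul_pow, mul_pow, hsqM]
    rw [hK2]
    field_simp
  have hsqrt : Real.sqrt (k ^ 2 - (n : ℝ) ^ 2 * Real.pi ^ 2 * (1 - M ^ 2) / d ^ 2)
      = k * Real.sqrt (1 - (n : ℝ) ^ 2 / K₀ ^ 2) := by
    rw [hkey, Real.sqrt_mul (sq_nonneg k), Real.sqrt_sq hk.le]
  have hsqrtpos : 0 < Real.sqrt (1 - (n : ℝ) ^ 2 / K₀ ^ 2) := Real.sqrt_pos.mpr hfrac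
  have hβdiff : βp - βm = 2 * k / (1 - M ^ 2) * Real.sqrt (1 - (n : ℝ) ^ 2 / K₀ ^ 2) := by
    rw [hβp, hβm, hsqrt]; field_simp; ring
  have hβlt : βm < βp := by
    have : 0 < βp - βm := by
      rw [hβdiff]; positivity
    linarith
  have hre : ∀ β : ℝ, (Complex.I * (β : ℂ) * Iv).re = -(β * S) := by
    intro β
    simp [hIv, Complex.mul_re, Complex.mul_im]
  have habs : ∀ β : ℝ, ‖Complex.exp (Complex.I * (β : ℂ) * Iv)‖
      = Real.exp (-(β * S)) := by
    intro β
    rw [Complex.norm_exp, hre]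
  have hD : Complex.exp (Complex.I * (βp : ℂ) * Iv) - Complex.exp (Complex.I * (βm : ℂ) * Iv)
      ≠ 0 := by
    intro h
    have heq : Complex.exp (Complex.I * (βp : ℂ) * Iv) = Complex.exp (Complex.I * (βm : ℂ) * Iv) :=
      sub_eq_zero.mp h
    have := congrArg (‖·‖) heq
    rw [habs, habs] at this
    have hlt := Real.exp_lt_exp.mpr (show -(βp * S) < -(βm * S) by nlinarith)
    linarith
  have hAmAp : Am / Ap = -(Complex.exp (Complex.I * (βp : ℂ) * Iv)
      / Complex.exp (Complex.I * (βm : ℂ) * Iv)) := by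
    rw [hAm, hAp]
    have hem : Complex.exp (Complex.I * (βm : ℂ) * Iv) ≠ 0 := Complex.exp_ne_zero _
    field_simp
    rw [mul_right_comm Complex.I Iv (βm : ℂ), div_self hD]
  rw [hAmAp, norm_neg, norm_div, habs, habs, ← Real.exp_sub]
  congr 1
  rw [show -(βp * S) - -(βm * S) = -((βp - βm) * S) by ring, hβdiff]
  ring
end

section
/- Let k > 0, d > 0, M ∈ [0,1), K₀ = kd/(π√(1−M²)), and let n ∈ ℕ with n > K₀, so that β±_n = (−kM ± i√(n²π²(1−M²)/d² − k²))/(1−M²). Let L > 0, S > 0, set I = L + iS, and define A±_n = ∓ e^{iβ∓_n I}/(e^{iβ⁺_n I} − e^{iβ⁻_n I}) (the denominator being nonzero). Then |A⁻_n/A⁺_n| = e^{−(2kL/(1−M²))√(n²/K₀² − 1)}. -/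
/-- Reflection coefficient amplitude for evanescent modes (`n > K₀`):
with `I = L + iS` and `A±ₙ = ∓ e^{iβ∓ₙI}/(e^{iβ⁺ₙI} - e^{iβ⁻ₙI})`, one has
`|A⁻ₙ/A⁺ₙ| = e^{-(2kL/(1-M²))√(n²/K₀²-1)}`. -/
theorem stmt_11 (k d M : ℝ) (hk : 0 < k) (hd : 0 < d) (hM0 : 0 ≤ M) (hM1 : M < 1)
    (K₀ : ℝ) (hK₀ : K₀ = k * d / (Real.pi * Real.sqrt (1 - M ^ 2)))
    (n : ℕ) (hn : K₀ < (n : ℝ))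
    (βp βm : ℂ)
    (hβp : βp = ((-(k * M) : ℝ) + Complex.I *
      (Real.sqrt ((n : ℝ) ^ 2 * Real.pi ^ 2 * (1 - M ^ 2) / d ^ 2 - k ^ 2) : ℝ))
      / ((1 - M ^ 2 : ℝ) : ℂ))
    (hβm : βm = ((-(k * M) : ℝ) - Complex.I *
      (Real.sqrt ((n : ℝ) ^ 2 * Real.pi ^ 2 * (1 - M ^ 2) / d ^ 2 - k ^ 2) : ℝ))
      / ((1 - M ^ 2 : ℝ) : ℂ))
    (L S : ℝ) (hL : 0 < L) (hS : 0 < S)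
    (Iv : ℂ) (hIv : Iv = (L : ℂ) + Complex.I * (S : ℂ))
    (Ap Am : ℂ)
    (hAp : Ap = -Complex.exp (Complex.I * βm * Iv)
      / (Complex.exp (Complex.I * βp * Iv) - Complex.exp (Complex.I * βm * Iv)))
    (hAm : Am = Complex.exp (Complex.I * βp * Iv)
      / (Complex.exp (Complex.I * βp * Iv) - Complex.exp (Complex.I * βm * Iv))) :
    ‖Am / Ap‖
      = Real.exp (-(2 * k * L / (1 - M ^ 2)) * Real.sqrt ((n : ℝ) ^ 2 / K₀ ^ 2 - 1)) := by
  set c : ℝ := 1 - M ^ 2 with hc_def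
  have hc : 0 < c := by nlinarith
  have hπ := Real.pi_pos
  have hsc : 0 < Real.sqrt c := Real.sqrt_pos.mpr hc
  have hscsq : Real.sqrt c ^ 2 = c := Real.sq_sqrt hc.le
  have hK₀pos : 0 < K₀ := by
    rw [hK₀]; positivity
  have hnpos : 0 < (n : ℝ) := lt_trans hK₀pos hn
  set X : ℝ := (n : ℝ) ^ 2 * Real.pi ^ 2 * c / d ^ 2 - k ^ 2 with hX_def
  have hXpos : 0 < X := by
    have h1 : k * d < (n : ℝ) * (Real.pi * Real.sqrt c) := by
      rw [hK₀] at hn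
      calc k * d = (k * d / (Real.pi * Real.sqrt c)) * (Real.pi * Real.sqrt c) := by
            field_simp
        _ < (n : ℝ) * (Real.pi * Real.sqrt c) := by
            apply mul_lt_mul_of_pos_right hn; positivity
    have h2 : (k * d) ^ 2 < ((n : ℝ) * (Real.pi * Real.sqrt c)) ^ 2 := by
      apply pow_lt_pow_left₀ h1 (by positivity)
      norm_num
    rw [hX_def]
    rw [sub_pos, lt_div_iff₀ (by positivity)]
    nlinarith [hscsq]
  set γ : ℝ := Real.sqrt X with hγ_def
  have hγpos : 0 < γ := Real.sqrt_pos.mpr hXpos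
  -- β⁺ - β⁻ = (2γ/c) * I
  have hdiff : βp - βm = ((2 * γ / c : ℝ) : ℂ) * Complex.I := by
    rw [hβp, hβm]
    have hcC : ((c : ℝ) : ℂ) ≠ 0 := Complex.ofReal_ne_zero.mpr hc.ne'
    push_cast
    field_simp
    ring
  -- exponent difference
  have hexpdiff : Complex.I * βp * Iv - Complex.I * βm * Iv
      = -(((2 * γ / c : ℝ) : ℂ) * Iv) := by
    have : Complex.I * βp * Iv - Complex.I * βm * Iv
        = Complex.I * (βp - βm) * Iv := by ring
    rw [this, hdiff]
    linear_combination ((2 * γ / c : ℝ) : ℂ) * Iv * Complex.I_sq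
  have hre : (Complex.I * βp * Iv - Complex.I * βm * Iv).re = -(2 * γ / c * L) := by
    rw [hexpdiff, hIv]
    simp [Complex.mul_re]
  -- denominator nonzero
  have hne : Complex.exp (Complex.I * βp * Iv) ≠ Complex.exp (Complex.I * βm * Iv) := by
    intro h
    have h1 : Complex.exp (Complex.I * βp * Iv - Complex.I * βm * Iv) = 1 := by
      rw [Complex.exp_sub, h, div_self (Complex.exp_ne_zero _)]
    have h2 : Real.exp (-(2 * γ / c * L)) = 1 := by
      have := congrArg (‖·‖) h1
      rwa [Complex.norm_exp, hre, norm_one] at this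
    have h3 : Real.exp (-(2 * γ / c * L)) < 1 := by
      apply Real.exp_lt_one_iff.mpr
      have : 0 < 2 * γ / c * L := by positivity
      linarith
    linarith
  have hD : Complex.exp (Complex.I * βp * Iv) - Complex.exp (Complex.I * βm * Iv) ≠ 0 :=
    sub_ne_zero.mpr hne
  -- ratio
  have hratio : Am / Ap = -Complex.exp (Complex.I * βp * Iv - Complex.I * βm * Iv) := by
    rw [hAm, hAp, Complex.exp_sub]
    field_simp
    have hD' := hD
    rw [mul_right_comm Complex.I βm Iv] at hD'
    rw [div_self hD']
  have habs : ‖Am / Ap‖ = Real.exp (-(2 * γ / c * L)) := by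
    rw [hratio, norm_neg, Complex.norm_exp, hre]
  rw [habs]
  congr 1
  -- exponent identity: k * √(n²/K₀² - 1) = γ
  have hK₀sq : K₀ ^ 2 = k ^ 2 * d ^ 2 / (Real.pi ^ 2 * c) := by
    rw [hK₀]
    rw [div_pow, mul_pow, mul_pow, hscsq]
  have hk2X : k ^ 2 * ((n : ℝ) ^ 2 / K₀ ^ 2 - 1) = X := by
    rw [hK₀sq, hX_def]
    field_simp
  have hkX : k * Real.sqrt ((n : ℝ) ^ 2 / K₀ ^ 2 - 1) = γ := by
    rw [hγ_def, ← hk2X, Real.sqrt_mul (sq_nonneg k), Real.sqrt_sq hk.le]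
  rw [← hkX]
  ring
end

section
/- Let k > 0, d > 0, M ∈ [0,1), K₀ = kd/(π√(1−M²)), and n ∈ ℕ with n < K₀, so β±_n = (−kM ± √(k² − n²π²(1−M²)/d²))/(1−M²) are real with β⁺_n − β⁻_n = (2k/(1−M²))√(1 − n²/K₀²). Let L > 0 and S > 0 satisfy (2k/(1−M²))√(1 − n²/K₀²)·S ≥ ln 2, and define ν⁺_n = β⁺_n − (β⁺_n − β⁻_n)/(1 − e^{−i(β⁺_n−β⁻_n)(L + iS)}). Then |β⁺_n − ν⁺_n| ≤ (4k/(1−M²)) e^{−(2k/(1−M²))√(1 − n²/K₀²)·S}. -/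
/-- DtN error bound for propagating modes (`n < K₀`): with real
`β±ₙ`, `β⁺ₙ - β⁻ₙ = (2k/(1-M²))√(1-n²/K₀²)`, and `(2k/(1-M²))√(1-n²/K₀²)·S ≥ ln 2`, the
PML DtN symbol `ν⁺ₙ = β⁺ₙ - (β⁺ₙ-β⁻ₙ)/(1 - e^{-i(β⁺ₙ-β⁻ₙ)(L+iS)})` satisfies
`|β⁺ₙ - ν⁺ₙ| ≤ (4k/(1-M²)) e^{-(2k/(1-M²))√(1-n²/K₀²)·S}`. -/
theorem stmt_14 (k d M : ℝ) (hk : 0 < k) (hd : 0 < d) (hM0 : 0 ≤ M) (hM1 : M < 1)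
    (K₀ : ℝ) (hK₀ : K₀ = k * d / (Real.pi * Real.sqrt (1 - M ^ 2)))
    (n : ℕ) (hn : (n : ℝ) < K₀)
    (βp βm : ℝ)
    (hβp : βp = (-(k * M) + Real.sqrt (k ^ 2 - (n : ℝ) ^ 2 * Real.pi ^ 2 * (1 - M ^ 2) / d ^ 2))
      / (1 - M ^ 2))
    (hβm : βm = (-(k * M) - Real.sqrt (k ^ 2 - (n : ℝ) ^ 2 * Real.pi ^ 2 * (1 - M ^ 2) / d ^ 2))
      / (1 - M ^ 2))
    (L S : ℝ) (hL : 0 < L) (hS : 0 < S)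
    (hcond : Real.log 2 ≤ (2 * k / (1 - M ^ 2)) * Real.sqrt (1 - (n : ℝ) ^ 2 / K₀ ^ 2) * S)
    (ν : ℂ)
    (hν : ν = (βp : ℂ) - ((βp : ℂ) - (βm : ℂ)) /
      (1 - Complex.exp (-Complex.I * ((βp : ℂ) - (βm : ℂ)) * ((L : ℂ) + Complex.I * (S : ℂ))))) :
    ‖(βp : ℂ) - ν‖
      ≤ (4 * k / (1 - M ^ 2)) *
        Real.exp (-(2 * k / (1 - M ^ 2)) * Real.sqrt (1 - (n : ℝ) ^ 2 / K₀ ^ 2) * S) := by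
  have hm2 : (0:ℝ) < 1 - M ^ 2 := by nlinarith
  have hπ : (0:ℝ) < Real.pi := Real.pi_pos
  have hK0 : 0 < K₀ := lt_of_le_of_lt (Nat.cast_nonneg n) hn
  have hrat : (n:ℝ)^2 / K₀^2 ≤ 1 := by
    have hKsq : (0:ℝ) < K₀ ^ 2 := by positivity
    rw [div_le_one hKsq]
    nlinarith [(Nat.cast_nonneg n : (0:ℝ) ≤ (n:ℝ)), hn]
  set s := Real.sqrt (1 - (n:ℝ)^2 / K₀^2) with hsdef
  have hs0 : 0 ≤ s := Real.sqrt_nonneg _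
  have hq : (0:ℝ) ≤ (n:ℝ)^2 / K₀^2 := by positivity
  have hs1 : s ≤ 1 := Real.sqrt_le_one.mpr (by linarith)
  have hK0sq : K₀^2 = k^2 * d^2 / (Real.pi^2 * (1 - M^2)) := by
    rw [hK₀, div_pow, mul_pow, mul_pow, Real.sq_sqrt hm2.le]
  have harg : k ^ 2 - (n : ℝ) ^ 2 * Real.pi ^ 2 * (1 - M ^ 2) / d ^ 2
      = k^2 * (1 - (n:ℝ)^2 / K₀^2) := by
    rw [hK0sq]; field_simp
  have hR : Real.sqrt (k ^ 2 - (n : ℝ) ^ 2 * Real.pi ^ 2 * (1 - M ^ 2) / d ^ 2) = k * s := by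
    rw [harg, Real.sqrt_mul (sq_nonneg k), Real.sqrt_sq hk.le, hsdef]
  set B := 2 * k / (1 - M ^ 2) * s with hBdef
  have hB : βp - βm = B := by
    rw [hβp, hβm, hR, hBdef]; field_simp; ring
  have hB0 : 0 ≤ B := by positivity
  have hB2 : B ≤ 2 * k / (1 - M ^ 2) := by
    calc B ≤ 2 * k / (1 - M ^ 2) * 1 := by
          rw [hBdef]; exact mul_le_mul_of_nonneg_left hs1 (by positivity)
      _ = _ := mul_one _
  set E := Complex.exp (-Complex.I * ((βp : ℂ) - (βm : ℂ)) * ((L : ℂ) + Complex.I * (S : ℂ))) with hE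
  have hBc : ((βp : ℂ) - (βm : ℂ)) = (B : ℂ) := by
    rw [← hB]; push_cast; ring
  have habsE : ‖E‖ = Real.exp (B * S) := by
    rw [hE, Complex.norm_exp, hBc]
    congr 1
    simp [Complex.mul_re, Complex.add_re, Complex.add_im, Complex.mul_im]
  have hexp2 : (2:ℝ) ≤ Real.exp (B * S) := by
    calc (2:ℝ) = Real.exp (Real.log 2) := (Real.exp_log two_pos).symm
      _ ≤ Real.exp (B * S) := Real.exp_le_exp.mpr hcond
  have hden : Real.exp (B * S) / 2 ≤ ‖1 - E‖ := by
    calc Real.exp (B*S)/2 ≤ Real.exp (B*S) - 1 := by linarith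
      _ = ‖E‖ - ‖(1:ℂ)‖ := by simp [habsE]
      _ ≤ ‖E - 1‖ := norm_sub_norm_le _ _
      _ = ‖1 - E‖ := norm_sub_rev _ _
  have hdenpos : 0 < ‖1 - E‖ := by
    have : (0:ℝ) < Real.exp (B * S) / 2 := by positivity
    linarith
  have hne : (1 : ℂ) - E ≠ 0 := by
    intro h; rw [h] at hdenpos; simp at hdenpos
  have hdiff : (βp : ℂ) - ν = ((βp : ℂ) - (βm : ℂ)) / (1 - E) := by
    rw [hν, hE]; ring
  have habs : ‖(βp : ℂ) - ν‖ = B / ‖1 - E‖ := by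
    rw [hdiff, norm_div, hBc, Complex.norm_of_nonneg hB0]
  rw [habs]
  have hgoalexp : -(2 * k / (1 - M ^ 2)) * s * S = -(B * S) := by rw [hBdef]; ring
  rw [hgoalexp]
  calc B / ‖1 - E‖ ≤ B / (Real.exp (B * S) / 2) := by gcongr
    _ = 2 * B * Real.exp (-(B * S)) := by
        rw [Real.exp_neg]; field_simp
    _ ≤ 4 * k / (1 - M ^ 2) * Real.exp (-(B * S)) := by
        have h := mul_le_mul_of_nonneg_right hB2 (Real.exp_nonneg (-(B * S)))
        have h2 : 4 * k / (1 - M ^ 2) = 2 * (2 * k / (1 - M ^ 2)) := by ring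
        rw [h2]; linarith
end

section
/- Let k > 0, d > 0, M ∈ [0,1), K₀ = kd/(π√(1−M²)), N₀ = ⌊K₀⌋, and n ∈ ℕ with n ≥ N₀ + 1 and n > K₀, so β±_n = (−kM ± i√(n²π²(1−M²)/d² − k²))/(1−M²) with β⁺_n − β⁻_n = (2ik/(1−M²))√(n²/K₀² − 1). Let L > 0 satisfy (2kL/(1−M²))√((N₀+1)²/K₀² − 1) ≥ ln 2, and define ν⁺_n = β⁺_n − (β⁺_n − β⁻_n)/(1 − e^{−i(β⁺_n−β⁻_n)(L + iS)}) for any S ≥ 0. Then |β⁺_n − ν⁺_n| ≤ (4k/(1−M²))·(n/K₀)·e^{−(2kL/(1−M²))√((N₀+1)²/K₀² − 1)}. -/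
set_option maxHeartbeats 1000000 in
/-- DtN error bound for evanescent modes (`n ≥ N₀+1`, `n > K₀`,
`N₀ = ⌊K₀⌋`): with complex `β±ₙ` and `(2kL/(1-M²))√((N₀+1)²/K₀²-1) ≥ ln 2`, the PML DtN
symbol `ν⁺ₙ = β⁺ₙ - (β⁺ₙ-β⁻ₙ)/(1 - e^{-i(β⁺ₙ-β⁻ₙ)(L+iS)})` satisfies, for any `S ≥ 0`,
`|β⁺ₙ - ν⁺ₙ| ≤ (4k/(1-M²))(n/K₀) e^{-(2kL/(1-M²))√((N₀+1)²/K₀²-1)}`. -/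
theorem stmt_15 (k d M : ℝ) (hk : 0 < k) (hd : 0 < d) (hM0 : 0 ≤ M) (hM1 : M < 1)
    (K₀ : ℝ) (hK₀ : K₀ = k * d / (Real.pi * Real.sqrt (1 - M ^ 2)))
    (N₀ : ℕ) (hN₀ : N₀ = ⌊K₀⌋₊)
    (n : ℕ) (hn1 : N₀ + 1 ≤ n) (hn2 : K₀ < (n : ℝ))
    (βp βm : ℂ)
    (hβp : βp = ((-(k * M) : ℝ) + Complex.I *
      (Real.sqrt ((n : ℝ) ^ 2 * Real.pi ^ 2 * (1 - M ^ 2) / d ^ 2 - k ^ 2) : ℝ))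
      / ((1 - M ^ 2 : ℝ) : ℂ))
    (hβm : βm = ((-(k * M) : ℝ) - Complex.I *
      (Real.sqrt ((n : ℝ) ^ 2 * Real.pi ^ 2 * (1 - M ^ 2) / d ^ 2 - k ^ 2) : ℝ))
      / ((1 - M ^ 2 : ℝ) : ℂ))
    (L : ℝ) (hL : 0 < L)
    (hcond : Real.log 2 ≤
      (2 * k * L / (1 - M ^ 2)) * Real.sqrt (((N₀ : ℝ) + 1) ^ 2 / K₀ ^ 2 - 1))
    (S : ℝ) (hS : 0 ≤ S)
    (ν : ℂ)
    (hν : ν = βp - (βp - βm) /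
      (1 - Complex.exp (-Complex.I * (βp - βm) * ((L : ℂ) + Complex.I * (S : ℂ))))) :
    ‖βp - ν‖
      ≤ (4 * k / (1 - M ^ 2)) * ((n : ℝ) / K₀) *
        Real.exp (-(2 * k * L / (1 - M ^ 2)) *
          Real.sqrt (((N₀ : ℝ) + 1) ^ 2 / K₀ ^ 2 - 1)) := by
  have hm : (0:ℝ) < 1 - M ^ 2 := by nlinarith
  have hπ : (0:ℝ) < Real.pi := Real.pi_pos
  have hK0 : 0 < K₀ := by rw [hK₀]; positivity
  obtain ⟨σ, hσ⟩ : ∃ σ : ℝ, σ = Real.sqrt ((n : ℝ) ^ 2 * Real.pi ^ 2 * (1 - M ^ 2) / d ^ 2 - k ^ 2) := ⟨_, rfl⟩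
  obtain ⟨r, hr⟩ : ∃ r : ℝ, r = Real.sqrt ((n : ℝ) ^ 2 / K₀ ^ 2 - 1) := ⟨_, rfl⟩
  obtain ⟨rN, hrN⟩ : ∃ rN : ℝ, rN = Real.sqrt (((N₀ : ℝ) + 1) ^ 2 / K₀ ^ 2 - 1) := ⟨_, rfl⟩
  rw [← hσ] at hβp hβm
  rw [← hrN] at hcond ⊢
  have hKsq : K₀ ^ 2 = k ^ 2 * d ^ 2 / (Real.pi ^ 2 * (1 - M ^ 2)) := by
    rw [hK₀, div_pow, mul_pow, mul_pow, Real.sq_sqrt hm.le]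
  have harg : (n : ℝ) ^ 2 * Real.pi ^ 2 * (1 - M ^ 2) / d ^ 2 - k ^ 2
      = k ^ 2 * ((n : ℝ) ^ 2 / K₀ ^ 2 - 1) := by
    rw [hKsq]; field_simp
  have hσr : σ = k * r := by
    rw [hσ, hr, harg, Real.sqrt_mul (sq_nonneg k), Real.sqrt_sq hk.le]
  have hrpos : (0:ℝ) < (n : ℝ) ^ 2 / K₀ ^ 2 - 1 := by
    have : K₀ ^ 2 < (n:ℝ) ^ 2 := by nlinarith
    rw [sub_pos, lt_div_iff₀ (by positivity)]; linarith
  have hrn : rN ≤ r := by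
    rw [hrN, hr]
    apply Real.sqrt_le_sqrt
    have hNn : ((N₀:ℝ) + 1) ≤ (n:ℝ) := by exact_mod_cast hn1
    have h0 : (0:ℝ) ≤ (N₀:ℝ) + 1 := by positivity
    have : ((N₀:ℝ)+1)^2 ≤ (n:ℝ)^2 := by nlinarith
    gcongr
  have hrle : r ≤ (n:ℝ) / K₀ := by
    rw [hr]
    calc Real.sqrt ((n : ℝ) ^ 2 / K₀ ^ 2 - 1) ≤ Real.sqrt (((n:ℝ)/K₀)^2) := by
          apply Real.sqrt_le_sqrt; rw [div_pow]; linarith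
      _ = (n:ℝ)/K₀ := Real.sqrt_sq (by positivity)
  have hσnn : 0 ≤ σ := by rw [hσ]; exact Real.sqrt_nonneg _
  have hmc : ((1 - M ^ 2 : ℝ) : ℂ) ≠ 0 := by exact_mod_cast hm.ne'
  have hdiff : βp - βm = ((2 * σ / (1 - M ^ 2) : ℝ) : ℂ) * Complex.I := by
    rw [hβp, hβm]; push_cast; field_simp; ring
  obtain ⟨c, hc⟩ : ∃ c : ℝ, c = 2 * σ / (1 - M ^ 2) := ⟨_, rfl⟩
  rw [← hc] at hdiff
  have hcnn : 0 ≤ c := by rw [hc]; positivity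
  obtain ⟨z, hzd⟩ : ∃ z : ℂ, z = -Complex.I * (βp - βm) * ((L : ℂ) + Complex.I * (S : ℂ)) := ⟨_, rfl⟩
  rw [← hzd] at hν
  have hz : z = (c : ℂ) * ((L : ℂ) + Complex.I * (S : ℂ)) := by
    rw [hzd, hdiff]
    linear_combination (-(c:ℂ) * ((L:ℂ) + Complex.I*(S:ℂ))) * Complex.I_sq
  obtain ⟨t, htd⟩ : ∃ t : ℝ, t = c * L := ⟨_, rfl⟩
  have hzre : z.re = t := by
    rw [hz, htd]; simp [Complex.mul_re]
  have hT : (2 * k * L / (1 - M ^ 2)) * rN ≤ t := by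
    rw [htd, hc, hσr]
    have h1 : (2 * k * L / (1 - M ^ 2)) * rN ≤ (2 * k * L / (1 - M ^ 2)) * r :=
      mul_le_mul_of_nonneg_left hrn (by positivity)
    calc (2 * k * L / (1 - M ^ 2)) * rN ≤ (2 * k * L / (1 - M ^ 2)) * r := h1
      _ = 2 * (k * r) / (1 - M ^ 2) * L := by ring
  have ht2 : Real.log 2 ≤ t := le_trans hcond hT
  have hexpt : (2:ℝ) ≤ Real.exp t :=
    calc (2:ℝ) = Real.exp (Real.log 2) := (Real.exp_log (by norm_num)).symm
      _ ≤ Real.exp t := Real.exp_le_exp.mpr ht2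
  have habs_exp : ‖Complex.exp z‖ = Real.exp t := by
    rw [Complex.norm_exp, hzre]
  have hden : Real.exp t - 1 ≤ ‖1 - Complex.exp z‖ := by
    have h1 : ‖Complex.exp z‖ ≤ ‖Complex.exp z - 1‖ + 1 := by
      calc ‖Complex.exp z‖ = ‖(Complex.exp z - 1) + 1‖ := by ring_nf
        _ ≤ ‖Complex.exp z - 1‖ + ‖(1:ℂ)‖ :=
            norm_add_le (Complex.exp z - 1) 1
        _ = ‖Complex.exp z - 1‖ + 1 := by rw [norm_one]
    rw [habs_exp] at h1
    have h2 : ‖Complex.exp z - 1‖ = ‖1 - Complex.exp z‖ := by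
      rw [← neg_sub (1:ℂ), norm_neg]
    linarith [h1, h2.le, h2.ge]
  have hdenpos : (0:ℝ) < ‖1 - Complex.exp z‖ := by linarith
  have hne : (1 : ℂ) - Complex.exp z ≠ 0 := by
    intro h; rw [h] at hdenpos; simp at hdenpos
  have hβν : βp - ν = (βp - βm) / (1 - Complex.exp z) := by rw [hν]; ring
  have habsdiff : ‖βp - βm‖ = c := by
    rw [hdiff, norm_mul, Complex.norm_I, mul_one, Complex.norm_real, Real.norm_eq_abs, abs_of_nonneg hcnn]
  have key : ‖βp - ν‖ = c / ‖1 - Complex.exp z‖ := by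
    rw [hβν, norm_div, habsdiff]
  rw [key]
  have hhalf : Real.exp t / 2 ≤ Real.exp t - 1 := by linarith
  have step1 : c / ‖1 - Complex.exp z‖ ≤ c / (Real.exp t / 2) := by
    apply div_le_div_of_nonneg_left hcnn (by positivity)
    exact le_trans hhalf hden
  have step2 : c / (Real.exp t / 2) = 2 * c * Real.exp (-t) := by
    rw [Real.exp_neg]; field_simp
  have hclarge : c ≤ 2 * k / (1 - M ^ 2) * ((n:ℝ) / K₀) := by
    rw [hc, hσr]
    calc 2 * (k * r) / (1 - M ^ 2) ≤ 2 * (k * ((n:ℝ)/K₀)) / (1 - M ^ 2) := by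
          gcongr
      _ = 2 * k / (1 - M ^ 2) * ((n:ℝ)/K₀) := by ring
  have hexpmono : Real.exp (-t) ≤ Real.exp (-((2 * k * L / (1 - M ^ 2)) * rN)) :=
    Real.exp_le_exp.mpr (by linarith)
  calc c / ‖1 - Complex.exp z‖ ≤ 2 * c * Real.exp (-t) := by
        rw [← step2]; exact step1
    _ ≤ 2 * (2 * k / (1 - M ^ 2) * ((n:ℝ) / K₀)) * Real.exp (-((2 * k * L / (1 - M ^ 2)) * rN)) := by
        apply mul_le_mul (by linarith) hexpmono (Real.exp_nonneg _)
        positivity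
    _ = (4 * k / (1 - M ^ 2)) * ((n : ℝ) / K₀) *
        Real.exp (-(2 * k * L / (1 - M ^ 2)) * rN) := by ring_nf
end
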